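/- Let G be a subgroup of SL(2,ℂ) whose natural action on ℂ² is irreducible. Then G is unitary if and only if the ℝ-subalgebra A of the 2×2 complex matrices generated by G has real dimension 4. -/

import Mathlib

open Matrix Complex

abbrev Mat2 := Matrix (Fin 2) (Fin 2) ℂ


lemma adj2 (X : Mat2) : adjugate X = X.trace • 1 - X := by
  rw [adjugate_fin_two]
  ext i j
  fin_cases i <;> fin_cases j <;>
    simp [trace_fin_two, Matrix.one_apply]

lemma trace_adj2 (X : Mat2) : (adjugate X).trace = X.trace := by
  rw [adj2]; simp [trace_fin_two, Matrix.one_apply]; ring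

lemma ch2 (X : Mat2) : X * X = X.trace • X - X.det • 1 := by
  have h := X.mul_adjugate
  rw [adj2, mul_sub] at h
  have h2 : X * (X.trace • 1) = X.trace • X := by
    rw [Matrix.mul_smul, mul_one]
  rw [h2] at h
  linear_combination (norm := module) -h

lemma det2 (X : Mat2) (lam : ℂ) : (X - lam • 1).det = lam^2 - X.trace * lam + X.det := by
  simp [Matrix.det_fin_two, trace_fin_two, Matrix.one_apply, Matrix.sub_apply]
  ring

lemma trace_mul_std (X : Mat2) (i j : Fin 2) :
    (X * Matrix.single j i 1).trace = X i j := by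
  fin_cases i <;> fin_cases j <;>
    simp [Matrix.trace, Matrix.diag, Matrix.mul_apply, Matrix.single, Fin.sum_univ_two]

lemma tracepair_nondeg (X : Mat2) (h : ∀ Y : Mat2, (X * Y).trace = 0) : X = 0 := by
  ext i j
  have := h (Matrix.single j i 1)
  rw [trace_mul_std] at this
  simpa using this

-- every 2x2 complex matrix has an eigenvector
lemma exists_eigenvector (X : Mat2) : ∃ (lam : ℂ) (v : Fin 2 → ℂ), v ≠ 0 ∧ X *ᵥ v = lam • v := by
  obtain ⟨lam, hlam⟩ : ∃ lam : ℂ, lam^2 - X.trace * lam + X.det = 0 := by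
    have hdeg : (Polynomial.X ^ 2 - Polynomial.C X.trace * Polynomial.X + Polynomial.C X.det :
        Polynomial ℂ).degree = 2 := by compute_degree!
    obtain ⟨lam, hl⟩ := IsAlgClosed.exists_root
      (Polynomial.X ^ 2 - Polynomial.C X.trace * Polynomial.X + Polynomial.C X.det :
        Polynomial ℂ) (by rw [hdeg]; norm_num)
    exact ⟨lam, by simpa [Polynomial.IsRoot] using hl⟩
  have hdet : (X - lam • 1).det = 0 := by rw [det2]; exact hlam
  obtain ⟨v, hv, hv0⟩ := (Matrix.exists_mulVec_eq_zero_iff).2 hdet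
  refine ⟨lam, v, hv, ?_⟩
  have h3 := hv0
  rw [Matrix.sub_mulVec, sub_eq_zero] at h3
  rw [h3, Matrix.smul_mulVec, Matrix.one_mulVec]

noncomputable def appv (v : Fin 2 → ℂ) : Mat2 →ₗ[ℂ] (Fin 2 → ℂ) where
  toFun X := X *ᵥ v
  map_add' a b := Matrix.add_mulVec a b v
  map_smul' c a := by simp [Matrix.smul_mulVec]

noncomputable def appr (r : Fin 2 → ℂ) : Mat2 →ₗ[ℂ] (Fin 2 → ℂ) where
  toFun X := r ᵥ* X
  map_add' a b := by simp [Matrix.vecMul_add]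
  map_smul' c a := by
    ext j
    simp [Matrix.vecMul, dotProduct, Fin.sum_univ_two]
    ring

lemma pair_dep (W : Submodule ℂ (Fin 2 → ℂ)) (hW : W ≠ ⊤) {v w : Fin 2 → ℂ}
    (hv : v ∈ W) (hw : w ∈ W) (hv0 : v ≠ 0) : ∃ c : ℂ, w = c • v := by
  by_contra hc
  push_neg at hc
  have hind : LinearIndependent ℂ ![v, w] := by
    rw [LinearIndependent.pair_iff]
    intro s t hst
    rcases eq_or_ne t 0 with ht | ht
    · subst ht
      simp only [smul_zero, zero_smul, add_zero] at hst
      rcases smul_eq_zero.1 hst with h | h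
      · exact ⟨h, rfl⟩
      · exact absurd h hv0
    · exfalso
      apply hc (-s/t)
      have h4 : t • w = (-s) • v := by linear_combination (norm := module) hst
      have h5 := congrArg (fun z => t⁻¹ • z) h4
      simp only [smul_smul, inv_mul_cancel₀ ht, one_smul] at h5
      rw [h5, div_eq_inv_mul]
  set fam : Fin 2 → W := ![⟨v, hv⟩, ⟨w, hw⟩] with hfam
  have hcomp : W.subtype ∘ fam = ![v, w] := by
    ext i j
    fin_cases i <;> rfl
  have hind' : LinearIndependent ℂ fam :=
    LinearIndependent.of_comp W.subtype (hcomp ▸ hind)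
  have h2 : 2 ≤ Module.finrank ℂ W := by
    simpa using hind'.fintype_card_le_finrank
  have h3 : Module.finrank ℂ W < Module.finrank ℂ (Fin 2 → ℂ) :=
    Submodule.finrank_lt hW
  rw [Module.finrank_fin_fun] at h3
  omega

lemma mul_vecMulVec (A : Mat2) (c r : Fin 2 → ℂ) :
    A * vecMulVec c r = vecMulVec (A *ᵥ c) r := by
  ext i j
  simp [Matrix.mul_apply, Matrix.vecMulVec_apply, Matrix.mulVec, dotProduct,
    Fin.sum_univ_two]
  fin_cases i <;> simp [Matrix.cons_val_zero, Matrix.cons_val_one] <;> ring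

lemma vecMulVec_mul (A : Mat2) (c r : Fin 2 → ℂ) :
    vecMulVec c r * A = vecMulVec c (r ᵥ* A) := by
  ext i j
  simp [Matrix.mul_apply, Matrix.vecMulVec_apply, Matrix.vecMul, dotProduct,
    Fin.sum_univ_two]
  ring

lemma rank1_decomp (x : Mat2) (hx0 : x ≠ 0) (hdet : x.det = 0) :
    ∃ c r : Fin 2 → ℂ, c ≠ 0 ∧ r ≠ 0 ∧ x = vecMulVec c r := by
  rw [Matrix.det_fin_two] at hdet
  by_cases h00 : x 0 0 ≠ 0
  · refine ⟨![x 0 0, x 1 0], ![1, x 0 1 / x 0 0], ?_, ?_, ?_⟩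
    · intro h; exact h00 (by simpa using congrFun h 0)
    · intro h; simpa using congrFun h 0
    · ext i j
      fin_cases i <;> fin_cases j <;> simp [Matrix.vecMulVec_apply] <;>
        field_simp <;> linear_combination hdet
  · push_neg at h00
    by_cases h01 : x 0 1 ≠ 0
    · have h10 : x 1 0 = 0 := by
        rw [h00] at hdet
        simp only [zero_mul, zero_sub, neg_eq_zero, mul_eq_zero] at hdet
        rcases hdet with h | h
        · exact absurd h h01
        · exact h
      refine ⟨![x 0 1, x 1 1], ![0, 1], ?_, ?_, ?_⟩
      · intro h; exact h01 (by simpa using congrFun h 0)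
      · intro h; simpa using congrFun h 1
      · ext i j
        fin_cases i <;> fin_cases j <;> simp [Matrix.vecMulVec_apply, h00, h10]
    · push_neg at h01
      have hx1 : ![x 1 0, x 1 1] ≠ 0 := by
        intro h
        apply hx0
        ext i j
        fin_cases i <;> fin_cases j <;>
          first
          | exact h00
          | exact h01
          | simpa using congrFun h 0
          | simpa using congrFun h 1
      refine ⟨![0, 1], ![x 1 0, x 1 1], ?_, hx1, ?_⟩
      · intro h; simpa using congrFun h 1
      · ext i j
        fin_cases i <;> fin_cases j <;> simp [Matrix.vecMulVec_apply, h00, h01]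

lemma exists_eigenvector' (X : Mat2) : ∃ (lam : ℂ) (v : Fin 2 → ℂ), v ≠ 0 ∧ X *ᵥ v = lam • v :=
  exists_eigenvector X

section Burnside

variable (V : Submodule ℂ Mat2) (h1 : (1 : Mat2) ∈ V)
  (hmul : ∀ x ∈ V, ∀ y ∈ V, x * y ∈ V)
  (htrans : ∀ v : Fin 2 → ℂ, v ≠ 0 → ∀ w, ∃ x ∈ V, x *ᵥ v = w)

include h1 hmul htrans

lemma rank1_top (c r : Fin 2 → ℂ) (hc : c ≠ 0) (hr : r ≠ 0)
    (hcr : vecMulVec c r ∈ V) : V = ⊤ := by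
  have ha : ∀ w, vecMulVec w r ∈ V := by
    intro w
    obtain ⟨z, hz, hzc⟩ := htrans c hc w
    have := hmul z hz _ hcr
    rwa [mul_vecMulVec, hzc] at this
  have hb : ∀ u, ∃ z ∈ V, r ᵥ* z = u := by
    intro u
    set W' : Submodule ℂ (Fin 2 → ℂ) := V.map (appr r) with hW'
    by_cases hWt : W' = ⊤
    · have : u ∈ W' := hWt ▸ Submodule.mem_top
      obtain ⟨z, hz, hzu⟩ := this
      exact ⟨z, hz, hzu⟩
    · exfalso
      have hrW : r ∈ W' := ⟨1, h1, by simp [appr]⟩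
      have hdep : ∀ w ∈ W', ∃ cc : ℂ, w = cc • r := fun w hw => pair_dep W' hWt hrW hw hr
      set u0 : Fin 2 → ℂ := ![r 1, -(r 0)] with hu0
      have hu00 : u0 ≠ 0 := by
        intro h
        apply hr
        ext i
        fin_cases i
        · have := congrFun h 1
          simpa [hu0, neg_eq_zero] using this
        · simpa [hu0] using congrFun h 0
      have key : ∀ w : Fin 2 → ℂ, r ⬝ᵥ w = 0 := by
        intro w
        obtain ⟨z, hz, hzw⟩ := htrans u0 hu00 w
        obtain ⟨cz, hcz⟩ := hdep (r ᵥ* z) ⟨z, hz, rfl⟩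
        have h2' : r ⬝ᵥ u0 = 0 := by
          simp [hu0, dotProduct, Fin.sum_univ_two]
          ring
        have h1' : (r ᵥ* z) ⬝ᵥ u0 = 0 := by
          rw [hcz, smul_dotProduct, h2', smul_zero]
        rw [← hzw, Matrix.dotProduct_mulVec, h1']
      apply hr
      ext i
      fin_cases i
      · simpa [dotProduct, Fin.sum_univ_two] using key ![1, 0]
      · simpa [dotProduct, Fin.sum_univ_two] using key ![0, 1]
  have hc' : ∀ w u, vecMulVec w u ∈ V := by
    intro w u
    obtain ⟨z, hz, hzu⟩ := hb u
    have := hmul _ (ha w) z hz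
    rwa [_root_.vecMulVec_mul, hzu] at this
  rw [Submodule.eq_top_iff']
  intro y
  have hy : y = vecMulVec (Pi.single 0 1) (y 0) + vecMulVec (Pi.single 1 1) (y 1) := by
    ext p q
    fin_cases p <;> simp [Matrix.vecMulVec_apply, Pi.single_apply]
  rw [hy]
  exact V.add_mem (hc' _ _) (hc' _ _)

lemma burnside : V = ⊤ := by
  set e0 : Fin 2 → ℂ := ![1, 0] with he0
  set e1 : Fin 2 → ℂ := ![0, 1] with he1
  have he00 : e0 ≠ 0 := by
    intro h; simpa [he0] using congrFun h 0
  by_cases hker : ∃ x ∈ V, x ≠ 0 ∧ x *ᵥ e0 = 0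
  · obtain ⟨x, hx, hx0, hxe⟩ := hker
    have hdet : x.det = 0 := Matrix.exists_mulVec_eq_zero_iff.1 ⟨e0, he00, hxe⟩
    obtain ⟨c, r, hc, hr, hcr⟩ := rank1_decomp x hx0 hdet
    exact rank1_top V h1 hmul htrans c r hc hr (hcr ▸ hx)
  · push_neg at hker
    obtain ⟨g, hg, hge⟩ := htrans e0 he00 e1
    have hspan : ∀ x ∈ V, x = ((x *ᵥ e0) 0) • (1 : Mat2) + ((x *ᵥ e0) 1) • g := by
      intro x hx
      set a := (x *ᵥ e0) 0 with ha
      set b := (x *ᵥ e0) 1 with hb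
      set y := x - a • (1 : Mat2) - b • g with hy
      have hyV : y ∈ V := V.sub_mem (V.sub_mem hx (V.smul_mem _ h1)) (V.smul_mem _ hg)
      have hye : y *ᵥ e0 = 0 := by
        rw [hy, Matrix.sub_mulVec, Matrix.sub_mulVec,
          Matrix.smul_mulVec, Matrix.smul_mulVec, Matrix.one_mulVec, hge]
        ext i
        fin_cases i <;> simp [he0, he1, ha, hb, Matrix.vecHead, Matrix.vecTail]
      have hcon : ¬ (y ≠ 0 ∧ y *ᵥ e0 = 0) := fun h => (hker y hyV h.1) h.2
      rcases not_and_or.1 hcon with h | h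
      · push_neg at h
        rw [hy] at h
        linear_combination (norm := module) h
      · exact absurd hye h
    exfalso
    obtain ⟨lam, v, hv0, hgv⟩ := exists_eigenvector' g
    obtain ⟨x1, hx1, hx1v⟩ := htrans v hv0 e0
    obtain ⟨x2, hx2, hx2v⟩ := htrans v hv0 e1
    have heig : ∀ x ∈ V, x *ᵥ v = (((x *ᵥ e0) 0) + ((x *ᵥ e0) 1) * lam) • v := by
      intro x hx
      conv_lhs => rw [hspan x hx]
      rw [Matrix.add_mulVec, Matrix.smul_mulVec, Matrix.smul_mulVec,
        Matrix.one_mulVec, hgv]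
      ext i
      simp [Pi.smul_apply, smul_eq_mul]
      ring
    have h1v := heig x1 hx1
    have h2v := heig x2 hx2
    rw [hx1v] at h1v
    rw [hx2v] at h2v
    set c1 := ((x1 *ᵥ e0) 0) + ((x1 *ᵥ e0) 1) * lam
    set c2 := ((x2 *ᵥ e0) 0) + ((x2 *ᵥ e0) 1) * lam
    have e00 : (1 : ℂ) = c1 * v 0 := by simpa [he0] using congrFun h1v 0
    have e01 : (0 : ℂ) = c1 * v 1 := by simpa [he0] using congrFun h1v 1
    have e11 : (1 : ℂ) = c2 * v 1 := by simpa [he1] using congrFun h2v 1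
    rcases mul_eq_zero.1 e01.symm with h | h
    · rw [h, zero_mul] at e00
      exact one_ne_zero e00
    · rw [h, mul_zero] at e11
      exact one_ne_zero e11

end Burnside

noncomputable def appv' (v : Fin 2 → ℂ) : Mat2 →ₗ[ℂ] (Fin 2 → ℂ) where
  toFun X := X *ᵥ v
  map_add' a b := Matrix.add_mulVec a b v
  map_smul' c a := by simp [Matrix.smul_mulVec]

-- ℝ-linear theta
noncomputable def thetaL : Mat2 →ₗ[ℝ] Mat2 where
  toFun X := (adjugate X)ᴴ
  map_add' a b := by
    simp only [adj2, Matrix.trace_add, add_smul]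
    rw [show a.trace • (1 : Mat2) + b.trace • (1 : Mat2) - (a + b)
        = (a.trace • (1 : Mat2) - a) + (b.trace • (1 : Mat2) - b) by abel]
    exact Matrix.conjTranspose_add _ _
  map_smul' r X := by
    simp only [adj2, RingHom.id_apply]
    rw [Matrix.trace_smul, smul_assoc, ← smul_sub]
    rw [Matrix.conjTranspose_smul, star_trivial]

lemma thetaL_apply (X : Mat2) : thetaL X = (adjugate X)ᴴ := rfl

lemma thetaL_mul (X Y : Mat2) : thetaL (X * Y) = thetaL X * thetaL Y := by
  simp only [thetaL_apply, Matrix.adjugate_mul_distrib, Matrix.conjTranspose_mul]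

lemma thetaL_eq_zero {X : Mat2} (h : thetaL X = 0) : X = 0 := by
  have h1 : adjugate X = 0 := by
    have := congrArg Matrix.conjTranspose h
    simpa [thetaL_apply] using this
  rw [adj2, sub_eq_zero] at h1
  have h2 : X.trace = 2 * X.trace := by
    conv_lhs => rw [← h1]
    simp [Matrix.trace_smul, Matrix.trace_one, smul_eq_mul]
    ring
  have h3 : X.trace = 0 := by linear_combination -h2
  rw [← h1, h3, zero_smul]

lemma thetaL_g (g : Mat2) (hdet : g.det = 1) : gᴴ * thetaL g = 1 := by
  rw [thetaL_apply, ← Matrix.conjTranspose_mul]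
  rw [Matrix.adjugate_mul, hdet, one_smul, Matrix.conjTranspose_one]

section Main

variable (S : Set Mat2)

noncomputable def MR : Submodule ℝ Mat2 := Submodule.span ℝ S
noncomputable def VC : Submodule ℂ Mat2 := Submodule.span ℂ S

noncomputable def iLe : Mat2 ≃ₗ[ℝ] Mat2 where
  toFun X := Complex.I • X
  invFun X := (-Complex.I) • X
  map_add' a b := smul_add _ _ _
  map_smul' r X := smul_comm _ _ _
  left_inv X := by
    show (-Complex.I) • (Complex.I • X) = X
    rw [smul_smul]; simp
  right_inv X := by
    show Complex.I • ((-Complex.I) • X) = X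
    rw [smul_smul]; simp

noncomputable def iMR : Submodule ℝ Mat2 := (MR S).map (iLe.toLinearMap)

variable {S}
variable (hS1 : (1 : Mat2) ∈ S)
  (hSmul : ∀ a ∈ S, ∀ b ∈ S, a * b ∈ S)
  (hSdet : ∀ a ∈ S, a.det = 1)
  (hcom : ∀ v : Fin 2 → ℂ, v ≠ 0 → ∃ g ∈ S, ∀ c : ℂ, g *ᵥ v ≠ c • v)

lemma mem_MR {x : Mat2} (hx : x ∈ S) : x ∈ MR S := Submodule.subset_span hx

include hSmul in
lemma MR_mul {x y : Mat2} (hx : x ∈ MR S) (hy : y ∈ MR S) : x * y ∈ MR S := by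
  have h : MR S * MR S ≤ MR S := by
    rw [MR, Submodule.span_mul_span]
    apply Submodule.span_le.2
    rintro z ⟨a, ha, b, hb, rfl⟩
    exact Submodule.subset_span (hSmul a ha b hb)
  exact h (Submodule.mul_mem_mul hx hy)

include hS1 hcom in
lemma VC_trans : ∀ v : Fin 2 → ℂ, v ≠ 0 → ∀ w, ∃ x ∈ VC S, x *ᵥ v = w := by
  intro v hv w
  set W : Submodule ℂ (Fin 2 → ℂ) := (VC S).map (appv' v) with hW
  by_cases hWt : W = ⊤
  · have : w ∈ W := hWt ▸ Submodule.mem_top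
    obtain ⟨x, hx, hxv⟩ := this
    exact ⟨x, hx, hxv⟩
  · exfalso
    have hvW : v ∈ W := ⟨1, Submodule.subset_span hS1, by simp [appv']; ext i; fin_cases i <;> rfl⟩
    obtain ⟨g, hgS, hgne⟩ := hcom v hv
    have hgW : g *ᵥ v ∈ W := ⟨g, Submodule.subset_span hgS, rfl⟩
    obtain ⟨c, hc⟩ := pair_dep W hWt hvW hgW hv
    exact hgne c hc

include hS1 hSmul hcom in
lemma VC_top : VC S = ⊤ := by
  apply burnside (VC S) (Submodule.subset_span hS1)
  · intro x hx y hy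
    have h : VC S * VC S ≤ VC S := by
      rw [VC, Submodule.span_mul_span]
      apply Submodule.span_le.2
      rintro z ⟨a, ha, b, hb, rfl⟩
      exact Submodule.subset_span (hSmul a ha b hb)
    exact h (Submodule.mul_mem_mul hx hy)
  · exact VC_trans hS1 hcom

include hS1 hSmul hcom in
lemma trace_vanish (x : Mat2) (hx : ∀ s ∈ S, (x * s).trace = 0) : x = 0 := by
  have hall : ∀ y ∈ VC S, (x * y).trace = 0 := by
    intro y hy
    induction hy using Submodule.span_induction with
    | mem s hs => exact hx s hs
    | zero => simp
    | add a b _ _ ha hb => rw [mul_add, Matrix.trace_add, ha, hb, add_zero]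
    | smul c a _ ha => rw [Matrix.mul_smul, Matrix.trace_smul, ha, smul_zero]
  exact tracepair_nondeg x fun Y => hall Y ((VC_top hS1 hSmul hcom) ▸ Submodule.mem_top)

lemma MR_trace_im (htr : ∀ s ∈ S, (Matrix.trace s).im = 0) :
    ∀ x ∈ MR S, (Matrix.trace x).im = 0 := by
  intro x hx
  induction hx using Submodule.span_induction with
  | mem s hs => exact htr s hs
  | zero => simp
  | add a b _ _ ha hb => rw [Matrix.trace_add]; simp [Complex.add_im, ha, hb]
  | smul c a _ ha => rw [Matrix.trace_smul, Complex.real_smul]; simp [Complex.mul_im, ha]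

include hS1 hSmul hcom in
lemma inf_bot (htr : ∀ s ∈ S, (Matrix.trace s).im = 0) : MR S ⊓ iMR S = ⊥ := by
  rw [eq_bot_iff]
  rintro x ⟨hxM, m, hm, hxm⟩
  simp only [Submodule.mem_bot]
  have hxe : x = Complex.I • m := by rw [← hxm]; rfl
  subst hxe
  apply trace_vanish hS1 hSmul hcom
  intro s hs
  have hsM : s ∈ MR S := mem_MR hs
  have h1 : ((Complex.I • m * s : Mat2)).trace.im = 0 :=
    MR_trace_im htr _ (MR_mul hSmul hxM hsM)
  have h2 : ((m * s : Mat2)).trace.im = 0 :=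
    MR_trace_im htr _ (MR_mul hSmul hm hsM)
  have h3 : (Complex.I • m * s : Mat2) = Complex.I • (m * s) := Matrix.smul_mul _ _ _
  rw [h3, Matrix.trace_smul] at h1 ⊢
  set t := (m * s).trace
  have h5 : t.re = 0 := by
    rw [smul_eq_mul, Complex.mul_im] at h1
    simpa using h1
  have h6 : t = 0 := Complex.ext h5 h2
  rw [h6, smul_zero]

include hS1 hSmul hcom in
lemma sup_top : MR S ⊔ iMR S = ⊤ := by
  rw [eq_top_iff]
  intro x hxt
  clear hxt
  have hx : x ∈ VC S := (VC_top hS1 hSmul hcom) ▸ Submodule.mem_top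
  have hi : ∀ y ∈ MR S ⊔ iMR S, Complex.I • y ∈ MR S ⊔ iMR S := by
    intro y hy
    obtain ⟨a, ha, b, hb, rfl⟩ := Submodule.mem_sup.1 hy
    obtain ⟨b0, hb0, hb0e⟩ := hb
    have hbe : b = Complex.I • b0 := by rw [← hb0e]; rfl
    rw [smul_add, hbe, smul_smul]
    apply Submodule.add_mem
    · exact Submodule.mem_sup_right ⟨a, ha, rfl⟩
    · apply Submodule.mem_sup_left
      have : Complex.I * Complex.I = -1 := Complex.I_mul_I
      rw [this]
      simpa using (MR S).neg_mem hb0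
  induction hx using Submodule.span_induction with
  | mem s hs => exact Submodule.mem_sup_left (mem_MR hs)
  | zero => exact Submodule.zero_mem _
  | add a b _ _ ha hb => exact Submodule.add_mem _ ha hb
  | smul c a _ ha =>
      have h1 : ((c.re : ℂ)) • a + ((c.im : ℂ) * Complex.I) • a = c • a := by
        rw [← add_smul, Complex.re_add_im]
      rw [← h1]
      apply Submodule.add_mem
      · rw [show ((c.re : ℂ)) = algebraMap ℝ ℂ c.re from rfl, algebraMap_smul]
        exact Submodule.smul_mem _ _ ha
      · have h2 : ((c.im : ℂ) * Complex.I) • a = (c.im : ℝ) • (Complex.I • a) := by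
          rw [← smul_smul]
          rw [show ((c.im : ℂ)) = algebraMap ℝ ℂ c.im from rfl, algebraMap_smul]
        rw [h2]
        exact Submodule.smul_mem _ _ (hi a ha)

lemma frk8 : Module.finrank ℝ Mat2 = 8 := by
  rw [Module.finrank_matrix]
  simp [Complex.finrank_real_complex]

lemma frk_iMR : Module.finrank ℝ (iMR S) = Module.finrank ℝ (MR S) :=
  LinearEquiv.finrank_map_eq iLe (MR S)

lemma dim4_of (hinf : MR S ⊓ iMR S = ⊥) (hsup : MR S ⊔ iMR S = ⊤) :
    Module.finrank ℝ (MR S) = 4 := by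
  have h := Submodule.finrank_sup_add_finrank_inf_eq (MR S) (iMR S)
  rw [hinf, hsup, frk_iMR, finrank_top, frk8, finrank_bot] at h
  omega

lemma inf_of_dim4 (hdim : Module.finrank ℝ (MR S) = 4) (hsup : MR S ⊔ iMR S = ⊤) :
    MR S ⊓ iMR S = ⊥ := by
  have h := Submodule.finrank_sup_add_finrank_inf_eq (MR S) (iMR S)
  rw [hsup, frk_iMR, finrank_top, frk8, hdim] at h
  have h0 : Module.finrank ℝ (MR S ⊓ iMR S : Submodule ℝ Mat2) = 0 := by omega
  exact Submodule.finrank_eq_zero.1 h0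

include hSdet in
lemma traces_of_unitary (H : Mat2) (hdet : H.det ≠ 0)
    (hU : ∀ g ∈ S, gᴴ * H * g = H) : ∀ g ∈ S, (Matrix.trace g).im = 0 := by
  intro g hg
  have hg1 : g.det = 1 := hSdet g hg
  have hadj : g * adjugate g = 1 := by
    rw [Matrix.mul_adjugate, hg1, one_smul]
  have h1 : gᴴ * H = H * adjugate g := by
    have := congrArg (fun X => X * adjugate g) (hU g hg)
    rw [mul_assoc, mul_assoc, hadj, mul_one] at this
    exact this
  have hHunit : IsUnit H.det := isUnit_iff_ne_zero.2 hdet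
  have h2 : gᴴ = H * adjugate g * H⁻¹ := by
    rw [← h1, mul_assoc, Matrix.mul_nonsing_inv H hHunit, mul_one]
  have h3 : (gᴴ).trace = (adjugate g).trace := by
    rw [h2, Matrix.trace_mul_cycle, Matrix.nonsing_inv_mul H hHunit, one_mul]
  rw [Matrix.trace_conjTranspose, trace_adj2] at h3
  have := congrArg Complex.im h3
  simp only [Complex.star_def, Complex.conj_im] at this
  linarith

include hS1 hSmul hSdet in
lemma traces_of_inf (hinf : MR S ⊓ iMR S = ⊥) : ∀ g ∈ S, (Matrix.trace g).im = 0 := by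
  intro g hg
  have hg1 : g.det = 1 := hSdet g hg
  have hch : g.trace • g = g * g + 1 := by
    rw [ch2 g, hg1, one_smul]
    abel
  have hgM : g ∈ MR S := mem_MR hg
  have hM1 : g.trace • g ∈ MR S := by
    rw [hch]
    exact Submodule.add_mem _ (MR_mul hSmul hgM hgM)
      (mem_MR hS1)
  set t := g.trace
  have hre : ((t.re : ℂ)) • g ∈ MR S := by
    rw [show ((t.re : ℂ)) = algebraMap ℝ ℂ t.re from rfl, algebraMap_smul]
    exact Submodule.smul_mem _ _ hgM
  have him : ((t.im : ℂ) * Complex.I) • g ∈ MR S := by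
    have hsum : ((t.re : ℂ)) • g + ((t.im : ℂ) * Complex.I) • g = t • g := by
      rw [← add_smul, Complex.re_add_im]
    have := Submodule.sub_mem _ hM1 hre
    rw [← hsum] at this
    simpa using this
  have hiM : ((t.im : ℂ) * Complex.I) • g ∈ iMR S := by
    refine ⟨(t.im : ℝ) • g, Submodule.smul_mem _ _ hgM, ?_⟩
    show Complex.I • ((t.im : ℝ) • g) = _
    rw [← algebraMap_smul ℂ t.im g, smul_smul, mul_comm]
    rfl
  have hzero : ((t.im : ℂ) * Complex.I) • g = 0 := by
    have : ((t.im : ℂ) * Complex.I) • g ∈ MR S ⊓ iMR S := ⟨him, hiM⟩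
    rwa [hinf, Submodule.mem_bot] at this
  have hg0 : g ≠ 0 := by
    intro h
    rw [h] at hg1
    simp at hg1
  rcases smul_eq_zero.1 hzero with h | h
  · rcases mul_eq_zero.1 h with h' | h'
    · exact_mod_cast congrArg Complex.re h'
    · exact absurd h' Complex.I_ne_zero
  · exact absurd h hg0

include hSdet hcom in
lemma det_ne_zero_of_ne (H : Mat2) (hH0 : H ≠ 0)
    (hU : ∀ g ∈ S, gᴴ * H * g = H) : H.det ≠ 0 := by
  intro hdet
  obtain ⟨v, hv0, hHv⟩ := Matrix.exists_mulVec_eq_zero_iff.2 hdet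
  set Wk : Submodule ℂ (Fin 2 → ℂ) := LinearMap.ker H.mulVecLin with hWk
  have hvW : v ∈ Wk := by
    simp [hWk, Matrix.mulVecLin, hHv]
  have hWt : Wk ≠ ⊤ := by
    intro h
    apply hH0
    ext i j
    have : H *ᵥ Pi.single j 1 = 0 := by
      have : (Pi.single j 1 : Fin 2 → ℂ) ∈ Wk := h ▸ Submodule.mem_top
      simpa [hWk, Matrix.mulVecLin] using this
    have h2 := congrFun this i
    rw [Matrix.mulVec_single] at h2
    simpa using h2
  obtain ⟨g, hgS, hgne⟩ := hcom v hv0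
  have hgv : g *ᵥ v ∈ Wk := by
    have hgdetH : gᴴ *ᵥ (H *ᵥ (g *ᵥ v)) = 0 := by
      rw [Matrix.mulVec_mulVec, Matrix.mulVec_mulVec, hU g hgS, hHv]
    have hu : H *ᵥ (g *ᵥ v) = 0 := by
      by_contra hne
      have hz : (gᴴ).det = 0 := Matrix.exists_mulVec_eq_zero_iff.1 ⟨_, hne, hgdetH⟩
      rw [Matrix.det_conjTranspose, hSdet g hgS] at hz
      simp at hz
    rw [hWk, LinearMap.mem_ker, Matrix.mulVecLin_apply]; exact hu
  obtain ⟨c, hc⟩ := pair_dep Wk hWt hvW hgv hv0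
  exact hgne c hc

lemma hstd (P Q : Mat2) (k l p q : Fin 2) :
    (P * Matrix.single k l (1 : ℂ) * Q) p q = P p k * Q l q := by
  rw [mul_assoc, Matrix.mul_apply]
  have h : ∀ a, (Matrix.single k l (1 : ℂ) * Q) a q = if a = k then Q l q else 0 := by
    intro a
    by_cases h : a = k
    · subst h
      rw [Matrix.single_mul_apply_same, one_mul]
      simp
    · rw [Matrix.single_mul_apply_of_ne _ _ _ _ _ h]
      simp [h]
  simp_rw [h, mul_ite, mul_zero]
  rw [Finset.sum_ite_eq' Finset.univ k]
  simp

set_option maxHeartbeats 1000000 in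
include hS1 hSmul hSdet hcom in
lemma construct (hinf : MR S ⊓ iMR S = ⊥) :
    ∃ H0 : Mat2, H0 ≠ 0 ∧ ∀ g ∈ S, gᴴ * H0 * g = H0 := by
  classical
  have htr := traces_of_inf hS1 hSmul hSdet hinf
  have htrM := MR_trace_im (S := S) htr
  set M := MR S with hM
  have hmem : ∀ (u v : ↥M), ((u : Mat2) * (v : Mat2)) ∈ M :=
    fun u v => MR_mul hSmul u.2 v.2
  set mm : ↥M → ↥M → ↥M := fun u v => ⟨(u : Mat2) * (v : Mat2), hmem u v⟩ with hmm
  set Bf : ↥M →ₗ[ℝ] ↥M →ₗ[ℝ] ℝ := LinearMap.mk₂ ℝ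
    (fun x y => (((x : Mat2) * (y : Mat2)).trace).re)
    (by intro m1 m2 n
        rw [Submodule.coe_add, add_mul, Matrix.trace_add]
        simp)
    (by intro c m n
        rw [Submodule.coe_smul, Matrix.smul_mul, Matrix.trace_smul, Complex.real_smul]
        simp [Complex.mul_re])
    (by intro m n1 n2
        rw [Submodule.coe_add, mul_add, Matrix.trace_add]
        simp)
    (by intro c m n
        rw [Submodule.coe_smul, Matrix.mul_smul, Matrix.trace_smul, Complex.real_smul]
        simp [Complex.mul_re]) with hBf
  have hBfa : ∀ (x y : ↥M), Bf x y = (((x : Mat2) * (y : Mat2)).trace).re := fun x y => rfl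
  have hBnd : LinearMap.BilinForm.Nondegenerate Bf := by
    apply LinearMap.BilinForm.Nondegenerate.ofSeparatingLeft
    intro x hx
    have hxz : (x : Mat2) = 0 := by
      apply trace_vanish hS1 hSmul hcom
      intro s hs
      have h1 : (((x : Mat2) * s).trace).re = 0 := hx ⟨s, mem_MR hs⟩
      have h2 : (((x : Mat2) * s).trace).im = 0 := htrM _ (MR_mul hSmul x.2 (mem_MR hs))
      exact Complex.ext h1 h2
    exact Subtype.ext hxz
  set b : Module.Basis (Module.Free.ChooseBasisIndex ℝ ↥M) ℝ ↥M := Module.Free.chooseBasis ℝ ↥M with hb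
  set d := LinearMap.BilinForm.dualBasis Bf hBnd b with hd
  have hdual : ∀ i j, Bf (d i) (b j) = if j = i then 1 else 0 :=
    LinearMap.BilinForm.apply_dualBasis_left (B := Bf) hBnd b
  have exp1 : ∀ m : ↥M, (m : Mat2) = ∑ j, (Bf m (b j)) • ((d j : Mat2)) := by
    intro m
    conv_lhs => rw [← d.sum_repr m]
    rw [show (((∑ j, (d.repr m j) • d j : ↥M)) : Mat2)
        = ∑ j, (d.repr m j) • ((d j : Mat2)) by rw [Submodule.coe_sum]; simp only [Submodule.coe_smul]]
    refine Finset.sum_congr rfl fun j _ => ?_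
    rw [LinearMap.BilinForm.dualBasis_repr_apply]
  have exp2 : ∀ m : ↥M, (m : Mat2) = ∑ j, (Bf (d j) m) • ((b j : Mat2)) := by
    intro m
    have hco : ∀ j, b.repr m j = Bf (d j) m := by
      intro j
      conv_rhs => rw [← b.sum_repr m]
      rw [map_sum]
      simp only [_root_.map_smul, smul_eq_mul, hdual]
      rw [Finset.sum_congr rfl (fun i _ => by rw [mul_ite, mul_one, mul_zero])]
      rw [Finset.sum_ite_eq' Finset.univ j]
      simp
    conv_lhs => rw [← b.sum_repr m]
    rw [show (((∑ j, (b.repr m j) • b j : ↥M)) : Mat2)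
        = ∑ j, (b.repr m j) • ((b j : Mat2)) by rw [Submodule.coe_sum]; simp only [Submodule.coe_smul]]
    exact Finset.sum_congr rfl fun j _ => by rw [hco j]
  set HK : Mat2 → Mat2 := fun K => ∑ i, thetaL (d i : Mat2) * K * (b i : Mat2) with hHK
  have hcoef : ∀ (x u w : ↥M), Bf (mm x u) w = Bf u (mm w x) := by
    intro x u w
    rw [hBfa, hBfa]
    show (((x : Mat2) * u * w).trace).re = (((u : Mat2) * (w * x)).trace).re
    rw [mul_assoc, Matrix.trace_mul_comm, mul_assoc]
  have hint : ∀ (K : Mat2) (x : ↥M), thetaL (x : Mat2) * HK K = HK K * (x : Mat2) := by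
    intro K x
    have hL : ∀ i, thetaL (x : Mat2) * (thetaL (d i : Mat2) * K * (b i : Mat2))
        = ∑ j, (Bf (mm x (d i)) (b j)) • (thetaL (d j : Mat2) * K * (b i : Mat2)) := by
      intro i
      rw [← mul_assoc, ← mul_assoc, ← thetaL_mul,
        show ((x : Mat2) * ((d i) : Mat2)) = ∑ j, (Bf (mm x (d i)) (b j)) • ((d j : Mat2))
          from exp1 (mm x (d i)),
        map_sum, Finset.sum_mul, Finset.sum_mul]
      refine Finset.sum_congr rfl fun j _ => ?_
      rw [_root_.map_smul, smul_mul_assoc, smul_mul_assoc]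
    have hR : ∀ i, (thetaL (d i : Mat2) * K * (b i : Mat2)) * (x : Mat2)
        = ∑ j, (Bf (d j) (mm (b i) x)) • (thetaL (d i : Mat2) * K * (b j : Mat2)) := by
      intro i
      rw [mul_assoc,
        show ((b i : Mat2) * (x : Mat2)) = ∑ j, (Bf (d j) (mm (b i) x)) • ((b j : Mat2))
          from exp2 (mm (b i) x),
        Finset.mul_sum]
      refine Finset.sum_congr rfl fun j _ => ?_
      rw [mul_smul_comm, mul_assoc]
    calc thetaL (x : Mat2) * HK K
        = ∑ i, thetaL (x : Mat2) * (thetaL (d i : Mat2) * K * (b i : Mat2)) := by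
          rw [hHK]; exact Finset.mul_sum _ _ _
      _ = ∑ i, ∑ j, (Bf (mm x (d i)) (b j)) • (thetaL (d j : Mat2) * K * (b i : Mat2)) :=
          Finset.sum_congr rfl fun i _ => hL i
      _ = ∑ j, ∑ i, (Bf (mm x (d i)) (b j)) • (thetaL (d j : Mat2) * K * (b i : Mat2)) :=
          Finset.sum_comm
      _ = ∑ j, ∑ i, (Bf (d i) (mm (b j) x)) • (thetaL (d j : Mat2) * K * (b i : Mat2)) := by
          refine Finset.sum_congr rfl fun j _ => Finset.sum_congr rfl fun i _ => ?_
          rw [hcoef]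
      _ = ∑ j, (thetaL (d j : Mat2) * K * (b j : Mat2)) * (x : Mat2) :=
          Finset.sum_congr rfl fun j _ => (hR j).symm
      _ = HK K * (x : Mat2) := by rw [hHK]; exact (Finset.sum_mul _ _ _).symm
  -- complex linear independence of the (b i)
  have hcind : ∀ (f : _ → ℂ), ∑ i, f i • ((b i : Mat2)) = 0 → ∀ i, f i = 0 := by
    intro f hf i
    set u : ↥M := ∑ k, (f k).re • b k with hu
    set w : ↥M := ∑ k, (f k).im • b k with hw
    have hcu : (u : Mat2) = ∑ k, ((f k).re : ℝ) • ((b k : Mat2)) := by simp [hu]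
    have hcw : (w : Mat2) = ∑ k, ((f k).im : ℝ) • ((b k : Mat2)) := by simp [hw]
    have hterm : ∀ k, f k • ((b k : Mat2))
        = ((f k).re : ℝ) • ((b k : Mat2) : Mat2)
          + Complex.I • (((f k).im : ℝ) • ((b k : Mat2))) := by
      intro k
      rw [← algebraMap_smul ℂ ((f k).re), ← algebraMap_smul ℂ ((f k).im), smul_smul,
        ← add_smul]
      norm_num
      rw [mul_comm, Complex.re_add_im]
    have hsum : (u : Mat2) + Complex.I • (w : Mat2) = 0 := by
      rw [hcu, hcw, Finset.smul_sum, ← Finset.sum_add_distrib]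
      rw [← hf]
      exact (Finset.sum_congr rfl fun k _ => (hterm k).symm)
    have huiM : (u : Mat2) ∈ iMR S := by
      refine ⟨((-w : ↥M) : Mat2), (-w).2, ?_⟩
      show Complex.I • ((-w : ↥M) : Mat2) = (u : Mat2)
      rw [Submodule.coe_neg, smul_neg, eq_comm, ← add_eq_zero_iff_eq_neg]
      exact hsum
    have hu0 : (u : Mat2) = 0 := by
      have : (u : Mat2) ∈ MR S ⊓ iMR S := ⟨u.2, huiM⟩
      rwa [hinf, Submodule.mem_bot] at this
    have hw0 : (w : Mat2) = 0 := by
      have h1 : Complex.I • (w : Mat2) = 0 := by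
        rw [← hsum, hu0, zero_add]
      rcases smul_eq_zero.1 h1 with h | h
      · exact absurd h Complex.I_ne_zero
      · exact h
    have hre : ∀ k, (f k).re = 0 := by
      have h1 : u = 0 := Subtype.ext hu0
      have := Fintype.linearIndependent_iff.1 b.linearIndependent (fun k => (f k).re)
      exact this (by rw [← hu]; exact h1)
    have him : ∀ k, (f k).im = 0 := by
      have h1 : w = 0 := Subtype.ext hw0
      have := Fintype.linearIndependent_iff.1 b.linearIndependent (fun k => (f k).im)
      exact this (by rw [← hw]; exact h1)
    exact Complex.ext (hre i) (him i)
  -- some HK K is nonzero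
  have hnz : ∃ K, HK K ≠ 0 := by
    by_contra hK
    push_neg at hK
    have hth0 : ∀ (i) (p k : Fin 2), (thetaL ((d i : Mat2))) p k = 0 := by
      intro i p k
      have hfam : ∑ i', ((thetaL ((d i' : Mat2))) p k) • ((b i' : Mat2)) = 0 := by
        ext l q
        simp only [Matrix.sum_apply, Matrix.smul_apply, smul_eq_mul, Matrix.zero_apply]
        have h1 := hK (Matrix.single k l 1)
        rw [hHK] at h1
        have h2 := congrFun (congrFun h1 p) q
        simp only [Matrix.sum_apply, Matrix.zero_apply] at h2
        rw [← h2]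
        exact Finset.sum_congr rfl fun i' _ =>
          (hstd (thetaL ((d i' : Mat2))) ((b i' : Mat2)) k l p q).symm
      exact hcind _ hfam i
    have hnontriv : Nontrivial ↥M := by
      refine ⟨⟨1, mem_MR hS1⟩, 0, ?_⟩
      intro h
      have := congrArg (fun z : ↥M => (z : Mat2)) h
      simp only [Submodule.coe_zero] at this
      exact one_ne_zero this
    obtain ⟨i⟩ := d.index_nonempty
    have hdz : d i = 0 := by
      apply Subtype.ext
      apply thetaL_eq_zero
      ext p k
      rw [hth0 i p k]
      rfl
    exact d.ne_zero i hdz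
  obtain ⟨K0, hK0⟩ := hnz
  refine ⟨HK K0, hK0, ?_⟩
  intro g hgS
  have hx := hint K0 ⟨g, mem_MR hgS⟩
  calc gᴴ * HK K0 * g = gᴴ * (HK K0 * g) := mul_assoc _ _ _
    _ = gᴴ * (thetaL g * HK K0) := by rw [← hx]
    _ = (gᴴ * thetaL g) * HK K0 := (mul_assoc _ _ _).symm
    _ = HK K0 := by rw [thetaL_g g (hSdet g hgS), one_mul]

end Main


/-- A subgroup of `SL(2,ℂ)`, viewed as a set of matrices, is *unitary* if it preserves some
nondegenerate Hermitian form `H` under `g ↦ gᴴ H g`. -/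
def IsUnitarySubgroup (G : Subgroup (Matrix.SpecialLinearGroup (Fin 2) ℂ)) : Prop :=
  ∃ H : Matrix (Fin 2) (Fin 2) ℂ, H.IsHermitian ∧ H.det ≠ 0 ∧
    ∀ g ∈ G, (g : Matrix (Fin 2) (Fin 2) ℂ)ᴴ * H * (g : Matrix (Fin 2) (Fin 2) ℂ) = H

/-- The natural action of `G ⊆ SL(2,ℂ)` on `ℂ²` is irreducible if there is no nonzero common
eigenvector. -/
def IsIrreducibleSubgroup (G : Subgroup (Matrix.SpecialLinearGroup (Fin 2) ℂ)) : Prop :=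
  ¬ ∃ v : Fin 2 → ℂ, v ≠ 0 ∧ ∀ g ∈ G, ∃ c : ℂ, (g : Matrix (Fin 2) (Fin 2) ℂ) *ᵥ v = c • v

/-- An irreducible subgroup of `SL(2,ℂ)` is unitary iff the real algebra it generates has
dimension 4. -/
theorem irreducible_unitary_iff_dim_four
    (G : Subgroup (Matrix.SpecialLinearGroup (Fin 2) ℂ))
    (hirr : IsIrreducibleSubgroup G) :
    IsUnitarySubgroup G ↔
      Module.finrank ℝ
        (Algebra.adjoin ℝ
          ((fun g : Matrix.SpecialLinearGroup (Fin 2) ℂ => (g : Matrix (Fin 2) (Fin 2) ℂ)) ''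
            (G : Set (Matrix.SpecialLinearGroup (Fin 2) ℂ)))) = 4 := by
  classical
  set S : Set Mat2 :=
    (fun g : Matrix.SpecialLinearGroup (Fin 2) ℂ => (g : Mat2)) ''
      (G : Set (Matrix.SpecialLinearGroup (Fin 2) ℂ)) with hS
  have hS1 : (1 : Mat2) ∈ S := ⟨1, G.one_mem, by simp⟩
  have hSmul : ∀ a ∈ S, ∀ b ∈ S, a * b ∈ S := by
    rintro a ⟨ga, hga, rfl⟩ b ⟨gb, hgb, rfl⟩
    exact ⟨ga * gb, G.mul_mem hga hgb, by simp⟩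
  have hSdet : ∀ a ∈ S, a.det = 1 := by
    rintro a ⟨ga, hga, rfl⟩
    exact Matrix.SpecialLinearGroup.det_coe ga
  have hcom : ∀ v : Fin 2 → ℂ, v ≠ 0 → ∃ g ∈ S, ∀ c : ℂ, g *ᵥ v ≠ c • v := by
    intro v hv
    rw [IsIrreducibleSubgroup] at hirr
    push_neg at hirr
    obtain ⟨g, hgG, hg⟩ := hirr v hv
    exact ⟨(g : Mat2), ⟨g, hgG, rfl⟩, hg⟩
  set SM : Submonoid Mat2 :=
    { carrier := S
      mul_mem' := fun {a b} ha hb => hSmul a ha b hb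
      one_mem' := hS1 } with hSM
  have hadj : Subalgebra.toSubmodule (Algebra.adjoin ℝ S) = MR S := by
    rw [Algebra.adjoin_eq_span]
    have h2 : ((Submonoid.closure S : Submonoid Mat2) : Set Mat2) = S := by
      rw [show S = ((SM : Submonoid Mat2) : Set Mat2) from rfl, Submonoid.closure_eq]
    rw [h2]
    rfl
  have hfr : Module.finrank ℝ (Algebra.adjoin ℝ S) = Module.finrank ℝ (MR S) := by
    rw [← hadj]
    rfl
  have hsup := sup_top hS1 hSmul hcom
  constructor
  · rintro ⟨H, hHerm, hHdet, hU⟩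
    have hU' : ∀ g ∈ S, gᴴ * H * g = H := by
      rintro a ⟨ga, hga, rfl⟩
      exact hU ga hga
    have htr := traces_of_unitary hSdet H hHdet hU'
    have hinf : MR S ⊓ iMR S = ⊥ := inf_bot hS1 hSmul hcom htr
    rw [hfr]
    exact dim4_of hinf hsup
  · intro hdim
    have hdim' : Module.finrank ℝ (MR S) = 4 := by rw [← hfr]; exact hdim
    have hinf := inf_of_dim4 hdim' hsup
    obtain ⟨H0, hH00, hU0⟩ := construct hS1 hSmul hSdet hcom hinf
    have hU0c : ∀ g ∈ S, gᴴ * H0ᴴ * g = H0ᴴ := by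
      intro g hg
      have h := congrArg Matrix.conjTranspose (hU0 g hg)
      rwa [Matrix.conjTranspose_mul, Matrix.conjTranspose_mul,
        Matrix.conjTranspose_conjTranspose, ← mul_assoc] at h
    by_cases hH1 : H0 + H0ᴴ ≠ 0
    · have hUsum : ∀ g ∈ S, gᴴ * (H0 + H0ᴴ) * g = H0 + H0ᴴ := by
        intro g hg
        rw [mul_add, add_mul, hU0 g hg, hU0c g hg]
      refine ⟨H0 + H0ᴴ, ?_, ?_, ?_⟩
      · show (H0 + H0ᴴ)ᴴ = H0 + H0ᴴ
        rw [Matrix.conjTranspose_add, Matrix.conjTranspose_conjTranspose, add_comm]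
      · exact det_ne_zero_of_ne hSdet hcom _ hH1 hUsum
      · intro g hg
        exact hUsum (g : Mat2) ⟨g, hg, rfl⟩
    · push_neg at hH1
      have hH0H : H0ᴴ = -H0 := eq_neg_of_add_eq_zero_right hH1
      set H2 : Mat2 := Complex.I • (H0 - H0ᴴ) with hH2
      have hH2ne : H2 ≠ 0 := by
        rw [hH2, hH0H, sub_neg_eq_add]
        intro h
        rcases smul_eq_zero.1 h with h' | h'
        · exact Complex.I_ne_zero h'
        · have h2 : (2 : ℂ) • H0 = 0 := by rw [two_smul]; exact h'
          rcases smul_eq_zero.1 h2 with h3 | h3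
          · norm_num at h3
          · exact hH00 h3
      have hUsum : ∀ g ∈ S, gᴴ * H2 * g = H2 := by
        intro g hg
        rw [hH2, Matrix.mul_smul, Matrix.smul_mul, mul_sub, sub_mul, hU0 g hg, hU0c g hg]
      refine ⟨H2, ?_, ?_, ?_⟩
      · show H2ᴴ = H2
        rw [hH2, Matrix.conjTranspose_smul, Matrix.conjTranspose_sub,
          Matrix.conjTranspose_conjTranspose]
        rw [Complex.star_def, Complex.conj_I, neg_smul, ← smul_neg, neg_sub]
      · exact det_ne_zero_of_ne hSdet hcom _ hH2ne hUsum
      · intro g hg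
        exact hUsum (g : Mat2) ⟨g, hg, rfl⟩
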